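/- Let A and B be monoidal categories with A rigid, and let F : A → B be a strong monoidal functor. Then F is faithful if and only if F separates morphisms with domain the unit object, i.e. for every object X of A and every pair of morphisms f, g : 𝟙 → X in A, F(f) = F(g) implies f = g. -/
import Mathlib


open CategoryTheory MonoidalCategory

/-- **Lemma 1 of Kahn, "Exactness and faithfulness of monoidal functors"** (domain case).
Let `A`, `B` be monoidal categories with `A` rigid, and `F : A ⥤ B` a strong monoidal
functor. Then `F` is faithful iff it separates morphisms with domain the unit object. -/
theorem faithful_iff_separates_from_unit
    {A : Type*} [Category A] [MonoidalCategory A] [RigidCategory A]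
    {B : Type*} [Category B] [MonoidalCategory B]
    (F : A ⥤ B) [F.Monoidal] :
    F.Faithful ↔ ∀ (X : A) (f g : 𝟙_ A ⟶ X), F.map f = F.map g → f = g := by
  constructor
  · intro hF X f g hfg
    exact F.map_injective hfg
  · intro h
    constructor
    intro X Y f g hfg
    have key : (tensorRightHomEquiv (𝟙_ A) X Xᘁ Y) ((λ_ X).hom ≫ f) =
        (tensorRightHomEquiv (𝟙_ A) X Xᘁ Y) ((λ_ X).hom ≫ g) := by
      apply h
      simp only [tensorRightHomEquiv, Equiv.coe_fn_mk, F.map_comp,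
        Functor.Monoidal.map_whiskerRight, hfg]
    have := (tensorRightHomEquiv (𝟙_ A) X Xᘁ Y).injective key
    rw [cancel_epi] at this
    exact this
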